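/- arXiv:2105.05543 — 6 statements merged into one kernel-verified Lean document; each statement's English description precedes it below -/
import Mathlib

section
/- For every (x,y,z) ∈ ℂ³ with z² = xy there exist traceless 2×2 complex matrices A and B with AB = BA such that tr(A²) = x, tr(B²) = y and tr(AB) = z. -/
open Matrix

lemma diag_helper (a b : ℂ) :
    ∃ A B : Matrix (Fin 2) (Fin 2) ℂ, A.trace = 0 ∧ B.trace = 0 ∧ A * B = B * A ∧
      (A * A).trace = 2 * a ^ 2 ∧ (B * B).trace = 2 * b ^ 2 ∧ (A * B).trace = 2 * (a * b) := by
  refine ⟨!![a, 0; 0, -a], !![b, 0; 0, -b], ?_, ?_, ?_, ?_, ?_, ?_⟩ <;>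
    simp [Matrix.trace_fin_two, Matrix.mul_fin_two] <;> ring

/-- Every point of the cone `{(x,y,z) ∈ ℂ³ : z² = xy}` is of the form
`(tr(A²), tr(B²), tr(AB))` for a commuting pair of traceless `2×2` complex matrices. -/
theorem statement1 (x y z : ℂ) (h : z ^ 2 = x * y) :
    ∃ A B : Matrix (Fin 2) (Fin 2) ℂ, A.trace = 0 ∧ B.trace = 0 ∧ A * B = B * A ∧
      (A * A).trace = x ∧ (B * B).trace = y ∧ (A * B).trace = z := by
  by_cases hx : x = 0
  · have hz : z = 0 := by
      have : z ^ 2 = 0 := by rw [h, hx, zero_mul]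
      exact pow_eq_zero_iff (n := 2) (by norm_num) |>.mp this
    obtain ⟨b, hb⟩ := Complex.isAlgClosed.exists_pow_nat_eq (y / 2) (n := 2) (by norm_num)
    obtain ⟨A, B, h1, h2, h3, h4, h5, h6⟩ := diag_helper 0 b
    refine ⟨A, B, h1, h2, h3, ?_, ?_, ?_⟩
    · rw [h4, hx]; ring
    · rw [h5, hb]; ring
    · rw [h6, hz]; ring
  · obtain ⟨a, ha⟩ := Complex.isAlgClosed.exists_pow_nat_eq (x / 2) (n := 2) (by norm_num)
    have ha0 : a ≠ 0 := by
      intro h0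
      rw [h0] at ha
      apply hx
      field_simp at ha
      simp [← ha]
    obtain ⟨A, B, h1, h2, h3, h4, h5, h6⟩ := diag_helper a (z / (2 * a))
    refine ⟨A, B, h1, h2, h3, ?_, ?_, ?_⟩
    · rw [h4, ha]; ring
    · rw [h5]
      have hx2 : x = 2 * a ^ 2 := by rw [ha]; ring
      field_simp
      rw [h, hx2]
    · rw [h6]; field_simp
end

section
/- Let R = ℂ[x,y,z]/(z² − xy) be the coordinate ring of the cone, and make the polynomial ring ℂ[X,Y] into an R-algebra via the ℂ-algebra homomorphism sending x ↦ X², y ↦ Y², z ↦ XY (which is well defined since (XY)² − X²·Y² = 0). Then ℂ[X,Y] is not flat as an R-module. Moreover, the fibre over the origin, namely the ℂ-algebra ℂ[X,Y]/(X², Y², XY), is a ℂ-vector space of dimension 3. -/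
open MvPolynomial

/-- The coordinate ring `ℂ[x,y,z]/(z² − xy)` of the cone `B`. -/
noncomputable abbrev ConeRing : Type :=
  MvPolynomial (Fin 3) ℂ ⧸
    Ideal.span {(X 2 : MvPolynomial (Fin 3) ℂ) ^ 2 - X 0 * X 1}

/-- The map `ℂ[x,y,z]/(z² − xy) → ℂ[X,Y]` given by `x ↦ X²`, `y ↦ Y²`, `z ↦ XY`,
which is well defined since `(XY)² − X²·Y² = 0`. -/
noncomputable def coneToPoly : ConeRing →+* MvPolynomial (Fin 2) ℂ :=
  Ideal.Quotient.lift _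
    (aeval ![(X 0 : MvPolynomial (Fin 2) ℂ) ^ 2, X 1 ^ 2, X 0 * X 1]).toRingHom
    (by
      intro a ha
      have h : Ideal.span {(X 2 : MvPolynomial (Fin 3) ℂ) ^ 2 - X 0 * X 1} ≤
          RingHom.ker (aeval ![(X 0 : MvPolynomial (Fin 2) ℂ) ^ 2, X 1 ^ 2,
            X 0 * X 1]).toRingHom := by
        rw [Ideal.span_le, Set.singleton_subset_iff, SetLike.mem_coe, RingHom.mem_ker]
        simp only [AlgHom.toRingHom_eq_coe, RingHom.coe_coe, map_sub, map_pow, map_mul, aeval_X]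
        simp only [Matrix.cons_val_zero, Matrix.cons_val_one, Matrix.head_cons,
          Matrix.cons_val_two, Matrix.tail_cons]
        ring
      exact h ha)

/-- `ℂ[X,Y]` as an algebra (in particular a module) over the cone ring, via
`x ↦ X²`, `y ↦ Y²`, `z ↦ XY`. -/
noncomputable instance : Algebra ConeRing (MvPolynomial (Fin 2) ℂ) :=
  coneToPoly.toAlgebra

lemma coneToPoly_mk (q : MvPolynomial (Fin 3) ℂ) :
    coneToPoly (Ideal.Quotient.mk _ q) =
      aeval ![(X 0 : MvPolynomial (Fin 2) ℂ) ^ 2, X 1 ^ 2, X 0 * X 1] q :=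
  Ideal.Quotient.lift_mk _ _ _

theorem L1 (j : Fin 2) (p q : MvPolynomial (Fin 2) ℂ) :
    coeff (Finsupp.single j 1) (p * q) =
      coeff 0 p * coeff (Finsupp.single j 1) q + coeff (Finsupp.single j 1) p * coeff 0 q := by
  rw [coeff_mul, Finsupp.antidiagonal_single]
  rw [show (Finset.HasAntidiagonal.antidiagonal 1 : Finset (ℕ × ℕ)) = {(0,1),(1,0)} from rfl]
  rw [Finset.map_insert, Finset.map_singleton, Finset.sum_insert (by simp [Finsupp.single_eq_zero])]
  simp [Prod.map]

/-- polynomials with no degree-one terms, as a subalgebra -/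
noncomputable def Slow : Subalgebra ℂ (MvPolynomial (Fin 2) ℂ) where
  carrier := {p | coeff (Finsupp.single 0 1) p = 0 ∧ coeff (Finsupp.single 1 1) p = 0}
  mul_mem' := by
    rintro p q ⟨h1, h2⟩ ⟨h3, h4⟩
    constructor <;> rw [L1] <;> simp_all
  add_mem' := by rintro p q ⟨h1, h2⟩ ⟨h3, h4⟩; constructor <;> simp_all
  algebraMap_mem' := by
    intro c
    constructor <;>
      simp [algebraMap_eq, coeff_C, eq_comm, Finsupp.single_eq_zero]

lemma key (r : ConeRing) : coneToPoly r ∈ Slow := by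
  obtain ⟨q, rfl⟩ := Ideal.Quotient.mk_surjective r
  rw [coneToPoly_mk]
  have h1 : aeval ![(X 0 : MvPolynomial (Fin 2) ℂ) ^ 2, X 1 ^ 2, X 0 * X 1] q ∈
      Algebra.adjoin ℂ (Set.range ![(X 0 : MvPolynomial (Fin 2) ℂ) ^ 2, X 1 ^ 2, X 0 * X 1]) := by
    rw [Algebra.adjoin_range_eq_range_aeval]
    exact ⟨q, rfl⟩
  refine Algebra.adjoin_le ?_ h1
  rintro _ ⟨i, rfl⟩
  fin_cases i <;>
    constructor <;>
    simp [pow_two, coeff_mul_X', Finsupp.single_apply, Finsupp.single_eq_zero, coeff_X']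

noncomputable def εhom : ConeRing →+* ℂ := constantCoeff.comp coneToPoly

noncomputable def Λ0 : ConeRing → ℂ := fun r => coeff (Finsupp.single 0 2) (coneToPoly r)

lemma εhom_eq (r : ConeRing) : εhom r = coeff 0 (coneToPoly r) := by
  simp [εhom, constantCoeff_eq]

lemma smul_poly (r : ConeRing) (m : MvPolynomial (Fin 2) ℂ) :
    r • m = coneToPoly r * m := rfl

lemma xq_eq : coneToPoly (Ideal.Quotient.mk _ (X 0)) = (X 0 : MvPolynomial (Fin 2) ℂ)^2 := by
  rw [coneToPoly_mk]; simp

lemma zq_eq : coneToPoly (Ideal.Quotient.mk _ (X 2)) =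
    (X 0 : MvPolynomial (Fin 2) ℂ) * X 1 := by
  rw [coneToPoly_mk]; simp

lemma coeff_mul_X0sq (p : MvPolynomial (Fin 2) ℂ) :
    coeff (Finsupp.single 0 2) (p * X 0 ^ 2) = coeff 0 p := by
  rw [X_pow_eq_monomial, coeff_mul_monomial', if_pos le_rfl]
  simp

lemma coeff_mul_X0X1 (p : MvPolynomial (Fin 2) ℂ) :
    coeff (Finsupp.single 0 2) (p * (X 0 * X 1)) = 0 := by
  have h : (X 0 : MvPolynomial (Fin 2) ℂ) * X 1 =
      monomial (Finsupp.single 0 1 + Finsupp.single 1 1) 1 := by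
    rw [show (X 0 : MvPolynomial (Fin 2) ℂ) = monomial (Finsupp.single 0 1) 1 from rfl,
      show (X 1 : MvPolynomial (Fin 2) ℂ) = monomial (Finsupp.single 1 1) 1 from rfl,
      monomial_mul, one_mul]
  rw [h, coeff_mul_monomial', if_neg]
  intro h2
  have := h2 1
  simp [Finsupp.single_apply] at this

lemma Λ0_mul_x (s : ConeRing) : Λ0 (s * Ideal.Quotient.mk _ (X 0)) = εhom s := by
  unfold Λ0
  rw [map_mul, xq_eq, coeff_mul_X0sq, εhom_eq]

lemma Λ0_mul_z (s : ConeRing) : Λ0 (s * Ideal.Quotient.mk _ (X 2)) = 0 := by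
  unfold Λ0
  rw [map_mul, zq_eq, coeff_mul_X0X1]

open TensorProduct

lemma Λ0_add (u v : ConeRing) : Λ0 (u + v) = Λ0 u + Λ0 v := by
  unfold Λ0
  have h : coneToPoly (u + v) = coneToPoly u + coneToPoly v := RingHom.map_add _ _ _
  rw [h, coeff_add]

lemma coeff_zero_gens (i : Fin 3) :
    coeff 0 ((aeval ![(X 0 : MvPolynomial (Fin 2) ℂ) ^ 2, X 1 ^ 2, X 0 * X 1] :
      MvPolynomial (Fin 3) ℂ →ₐ[ℂ] MvPolynomial (Fin 2) ℂ) (X i)) = 0 := by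
  rw [aeval_X]
  fin_cases i
  · show coeff 0 ((X 0 : MvPolynomial (Fin 2) ℂ) ^ 2) = 0
    rw [coeff_X_pow, if_neg (by simp [Finsupp.single_eq_zero])]
  · show coeff 0 ((X 1 : MvPolynomial (Fin 2) ℂ) ^ 2) = 0
    rw [coeff_X_pow, if_neg (by simp [Finsupp.single_eq_zero])]
  · show coeff 0 ((X 0 : MvPolynomial (Fin 2) ℂ) * X 1) = 0
    rw [← one_mul ((X 0 : MvPolynomial (Fin 2) ℂ) * X 1)]
    rw [show (X 0 : MvPolynomial (Fin 2) ℂ) * X 1 =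
        monomial (Finsupp.single 0 1 + Finsupp.single 1 1) 1 by
      rw [show (X 0 : MvPolynomial (Fin 2) ℂ) = monomial (Finsupp.single 0 1) 1 from rfl,
        show (X 1 : MvPolynomial (Fin 2) ℂ) = monomial (Finsupp.single 1 1) 1 from rfl,
        monomial_mul, one_mul]]
    rw [coeff_mul_monomial', if_neg]
    intro h
    have := h 1
    simp [Finsupp.single_apply] at this

lemma εhom_X (i : Fin 3) : εhom (Ideal.Quotient.mk _ (X i)) = 0 := by
  rw [εhom_eq, coneToPoly_mk]
  exact coeff_zero_gens i

set_option maxHeartbeats 1000000 in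
set_option synthInstance.maxHeartbeats 400000 in
lemma notFlat : ¬ Module.Flat ConeRing (MvPolynomial (Fin 2) ℂ) := by
  intro hf
  haveI := hf
  let xq : ConeRing := Ideal.Quotient.mk _ (X 0)
  let yq : ConeRing := Ideal.Quotient.mk _ (X 1)
  let zq : ConeRing := Ideal.Quotient.mk _ (X 2)
  let Imax : Ideal ConeRing := Ideal.span {xq, yq, zq}
  -- the residue field as a `ConeRing`-module
  let T := ConeRing ⧸ Imax
  letI : CommRing T := Ideal.Quotient.commRing Imax
  letI : Algebra ℂ T := Ideal.Quotient.algebra ℂ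
  letI : Algebra ConeRing T := Ideal.Quotient.algebra ConeRing
  have hεker : Imax ≤ RingHom.ker εhom := by
    rw [Ideal.span_le]
    rintro r (rfl | rfl | rfl) <;> exact εhom_X _
  let εT : T →+* ℂ := Ideal.Quotient.lift Imax εhom hεker
  -- `mk r = algebraMap ℂ T (εhom r)`
  have F : ∀ r : ConeRing, algebraMap ℂ T (εhom r) = Ideal.Quotient.mk Imax r := by
    have g : (Ideal.Quotient.mk Imax).comp (Ideal.Quotient.mk
          (Ideal.span {(X 2 : MvPolynomial (Fin 3) ℂ) ^ 2 - X 0 * X 1}))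
        = (algebraMap ℂ T).comp (εhom.comp (Ideal.Quotient.mk
          (Ideal.span {(X 2 : MvPolynomial (Fin 3) ℂ) ^ 2 - X 0 * X 1}))) := by
      apply MvPolynomial.ringHom_ext
      · intro c
        simp only [RingHom.comp_apply]
        rw [show (Ideal.Quotient.mk (Ideal.span {(X 2 : MvPolynomial (Fin 3) ℂ) ^ 2
            - X 0 * X 1})) (C c) = algebraMap ℂ ConeRing c from rfl]
        rw [show εhom (algebraMap ℂ ConeRing c) = c by
          rw [εhom_eq, show algebraMap ℂ ConeRing c = Ideal.Quotient.mk _ (C c) from rfl,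
            coneToPoly_mk, aeval_C]
          simp [coeff_C]]
        rfl
      · intro i
        simp only [RingHom.comp_apply]
        rw [εhom_X i, map_zero]
        have hmem : Ideal.Quotient.mk (Ideal.span {(X 2 : MvPolynomial (Fin 3) ℂ) ^ 2
            - X 0 * X 1}) (X i) ∈ Imax := by
          fin_cases i
          · exact Ideal.subset_span (by left; rfl)
          · exact Ideal.subset_span (by right; left; rfl)
          · exact Ideal.subset_span (by right; right; rfl)
        rwa [← Ideal.Quotient.eq_zero_iff_mem] at hmem
    intro r
    obtain ⟨q, rfl⟩ := Ideal.Quotient.mk_surjective r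
    exact (RingHom.congr_fun g q).symm
  have hsmulT : ∀ (r : ConeRing) (t : T), r • t = Ideal.Quotient.mk Imax r * t := by
    intro r t
    obtain ⟨s, rfl⟩ := Ideal.Quotient.mk_surjective t
    rw [← map_mul]
    rfl
  let I : Ideal ConeRing := Ideal.span {xq, zq}
  have hx : xq ∈ I := Ideal.subset_span (Set.mem_insert _ _)
  have hz : zq ∈ I := Ideal.subset_span (Set.mem_insert_of_mem _ rfl)
  have hsemi : ∀ (r s : ConeRing), s ∈ I → Λ0 (r * s) = εhom r * Λ0 s := by
    intro r s hs
    obtain ⟨a, b, hab⟩ := Ideal.mem_span_pair.mp hs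
    rw [← hab]
    rw [show r * (a * xq + b * zq) = (r * a) * xq + (r * b) * zq by ring]
    rw [Λ0_add, Λ0_add, Λ0_mul_x, Λ0_mul_x, Λ0_mul_z, Λ0_mul_z, map_mul]
    ring
  let b2 : I →ₗ[ConeRing] MvPolynomial (Fin 2) ℂ →ₗ[ConeRing] T :=
    LinearMap.mk₂ ConeRing
      (fun i m => algebraMap ℂ T (Λ0 i * coeff (Finsupp.single 1 1) m))
      (by intro i j m; rw [Submodule.coe_add, Λ0_add, add_mul, map_add])
      (by intro c i m
          rw [Submodule.coe_smul, smul_eq_mul, hsemi c i i.2, hsmulT, ← F c, mul_assoc,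
            map_mul])
      (by intro i m n; rw [coeff_add, mul_add, map_add])
      (by intro c i m
          rw [smul_poly c m, L1, (key c).2, ← εhom_eq, hsmulT, ← F c]
          rw [show Λ0 ↑i * (εhom c * coeff (Finsupp.single 1 1) m + 0 * coeff 0 m)
              = εhom c * (Λ0 ↑i * coeff (Finsupp.single 1 1) m) by ring]
          rw [map_mul])
  let φ := TensorProduct.lift b2
  let ix : I := ⟨xq, hx⟩
  let iz : I := ⟨zq, hz⟩
  set t : (↥I) ⊗[ConeRing] (MvPolynomial (Fin 2) ℂ) :=
    ix ⊗ₜ[ConeRing] (X 1 : MvPolynomial (Fin 2) ℂ) -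
      iz ⊗ₜ[ConeRing] (X 0 : MvPolynomial (Fin 2) ℂ) with htdef
  have e1 : ∀ (r : ConeRing) (m : MvPolynomial (Fin 2) ℂ),
      (r ⊗ₜ[ConeRing] m : ConeRing ⊗[ConeRing] (MvPolynomial (Fin 2) ℂ))
        = (1 : ConeRing) ⊗ₜ[ConeRing] (r • m) := by
    intro r m
    calc r ⊗ₜ[ConeRing] m = (r • (1 : ConeRing)) ⊗ₜ[ConeRing] m := by rw [smul_eq_mul, mul_one]
    _ = (1 : ConeRing) ⊗ₜ[ConeRing] (r • m) := TensorProduct.smul_tmul r 1 m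
  have h0 : LinearMap.rTensor (MvPolynomial (Fin 2) ℂ) I.subtype t = 0 := by
    rw [htdef, map_sub, LinearMap.rTensor_tmul, LinearMap.rTensor_tmul]
    rw [show I.subtype ix = xq from rfl, show I.subtype iz = zq from rfl]
    rw [e1 xq (X 1), e1 zq (X 0), ← TensorProduct.tmul_sub]
    rw [smul_poly, smul_poly, xq_eq, zq_eq]
    rw [show (X 0 : MvPolynomial (Fin 2) ℂ) ^ 2 * X 1 - (X 0 * X 1) * X 0 = 0 by ring,
      TensorProduct.tmul_zero]
  have ht : t = 0 :=
    Module.Flat.rTensor_preserves_injective_linearMap (M := MvPolynomial (Fin 2) ℂ) I.subtype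
      I.injective_subtype (by rw [h0, map_zero])
  have hφt : φ t = algebraMap ℂ T 1 := by
    rw [htdef, map_sub]
    rw [show φ (ix ⊗ₜ[ConeRing] (X 1 : MvPolynomial (Fin 2) ℂ))
        = algebraMap ℂ T (Λ0 xq * coeff (Finsupp.single 1 1) (X 1 : MvPolynomial (Fin 2) ℂ))
        from rfl]
    rw [show φ (iz ⊗ₜ[ConeRing] (X 0 : MvPolynomial (Fin 2) ℂ))
        = algebraMap ℂ T (Λ0 zq * coeff (Finsupp.single 1 1) (X 0 : MvPolynomial (Fin 2) ℂ))
        from rfl]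
    have v1 : Λ0 xq = 1 := by
      show coeff (Finsupp.single 0 2) (coneToPoly xq) = 1
      rw [xq_eq, coeff_X_pow, if_pos rfl]
    have v2 : Λ0 zq = 0 := by
      show coeff (Finsupp.single 0 2) (coneToPoly zq) = 0
      rw [zq_eq, ← one_mul ((X 0 : MvPolynomial (Fin 2) ℂ) * X 1), coeff_mul_X0X1]
    have v3 : coeff (Finsupp.single 1 1) (X 1 : MvPolynomial (Fin 2) ℂ) = 1 := coeff_X_same 1
    have v4 : coeff (Finsupp.single 1 1) (X 0 : MvPolynomial (Fin 2) ℂ) = 0 := by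
      rw [coeff_X', if_neg]
      simp [Finsupp.single_eq_single_iff]
    rw [v1, v2, v3, v4, mul_one, zero_mul, map_zero, sub_zero]
  rw [ht, map_zero] at hφt
  have : (0 : ℂ) = 1 := by
    have h2 := congrArg εT hφt
    rwa [map_zero, show εT (algebraMap ℂ T 1) = 1 by simp [εT]] at h2
  exact zero_ne_one this

noncomputable abbrev J2 : Ideal (MvPolynomial (Fin 2) ℂ) :=
  Ideal.span {(X 0 : MvPolynomial (Fin 2) ℂ) ^ 2, (X 1 : MvPolynomial (Fin 2) ℂ) ^ 2,
    (X 0 : MvPolynomial (Fin 2) ℂ) * X 1}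

lemma coeff_zero_mul' (p q : MvPolynomial (Fin 2) ℂ) :
    coeff 0 (p * q) = coeff 0 p * coeff 0 q := by
  rw [← constantCoeff_eq]
  exact map_mul constantCoeff p q

lemma gens_low : ∀ g ∈ ({(X 0 : MvPolynomial (Fin 2) ℂ) ^ 2,
    (X 1 : MvPolynomial (Fin 2) ℂ) ^ 2,
    (X 0 : MvPolynomial (Fin 2) ℂ) * X 1} : Set (MvPolynomial (Fin 2) ℂ)),
    coeff 0 g = 0 ∧ coeff (Finsupp.single 0 1) g = 0 ∧ coeff (Finsupp.single 1 1) g = 0 := by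
  rintro g (rfl | rfl | rfl) <;>
    refine ⟨?_, ?_, ?_⟩ <;>
    simp [pow_two, coeff_mul_X', coeff_X', Finsupp.single_apply, Finsupp.single_eq_zero,
      eq_comm]

lemma low_of_mem (p : MvPolynomial (Fin 2) ℂ) (hp : p ∈ J2) :
    coeff 0 p = 0 ∧ coeff (Finsupp.single 0 1) p = 0 ∧ coeff (Finsupp.single 1 1) p = 0 := by
  refine Submodule.span_induction gens_low ⟨by simp, by simp, by simp⟩ ?_ ?_ hp
  · rintro x y _ _ ⟨a1, a2, a3⟩ ⟨b1, b2, b3⟩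
    refine ⟨?_, ?_, ?_⟩ <;> simp [coeff_add, a1, a2, a3, b1, b2, b3]
  · rintro a x _ ⟨a1, a2, a3⟩
    rw [smul_eq_mul]
    exact ⟨by rw [coeff_zero_mul', a1, mul_zero],
      by rw [L1]; simp [a1, a2],
      by rw [L1]; simp [a1, a3]⟩

lemma monomial_decomp (d : Fin 2 →₀ ℕ) (c : ℂ) :
    monomial d c = C c * X 0 ^ (d 0) * X 1 ^ (d 1) := by
  have hd2 : d = Finsupp.single 0 (d 0) + Finsupp.single 1 (d 1) := by
    ext i
    fin_cases i <;> simp [Finsupp.single_apply]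
  rw [show (C c : MvPolynomial (Fin 2) ℂ) = monomial 0 c from rfl,
    X_pow_eq_monomial, X_pow_eq_monomial, monomial_mul, monomial_mul, mul_one, mul_one,
    zero_add, ← hd2]

lemma monomial_mem (d : Fin 2 →₀ ℕ) (c : ℂ) (hd : d ≠ 0) (h1 : d ≠ Finsupp.single 0 1)
    (h2 : d ≠ Finsupp.single 1 1) : monomial d c ∈ J2 := by
  have hx2 : (X 0 : MvPolynomial (Fin 2) ℂ) ^ 2 ∈ J2 :=
    Ideal.subset_span (by left; rfl)
  have hy2 : (X 1 : MvPolynomial (Fin 2) ℂ) ^ 2 ∈ J2 :=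
    Ideal.subset_span (by right; left; rfl)
  have hxy : (X 0 : MvPolynomial (Fin 2) ℂ) * X 1 ∈ J2 :=
    Ideal.subset_span (by right; right; rfl)
  rw [monomial_decomp]
  have hd2 : d = Finsupp.single 0 (d 0) + Finsupp.single 1 (d 1) := by
    ext i
    fin_cases i <;> simp [Finsupp.single_apply]
  by_cases ha : 2 ≤ d 0
  · rw [show d 0 = (d 0 - 2) + 2 by omega, pow_add]
    rw [show C c * (X 0 ^ (d 0 - 2) * (X 0 : MvPolynomial (Fin 2) ℂ) ^ 2) * X 1 ^ (d 1)
        = (C c * X 0 ^ (d 0 - 2) * X 1 ^ (d 1)) * X 0 ^ 2 by ring]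
    exact Ideal.mul_mem_left _ _ hx2
  · by_cases hb : 2 ≤ d 1
    · rw [show d 1 = (d 1 - 2) + 2 by omega, pow_add]
      rw [show C c * (X 0 : MvPolynomial (Fin 2) ℂ) ^ (d 0) * (X 1 ^ (d 1 - 2) * X 1 ^ 2)
          = (C c * X 0 ^ (d 0) * X 1 ^ (d 1 - 2)) * X 1 ^ 2 by ring]
      exact Ideal.mul_mem_left _ _ hy2
    · have ha1 : d 0 ≤ 1 := by omega
      have hb1 : d 1 ≤ 1 := by omega
      interval_cases h0 : d 0 <;> interval_cases h1' : d 1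
      · exact absurd (by rw [hd2]; simp) hd
      · exact absurd (by rw [hd2]; simp) h2
      · exact absurd (by rw [hd2]; simp) h1
      · rw [pow_one, pow_one, mul_assoc]
        exact Ideal.mul_mem_left _ _ hxy

lemma mem_of_low (p : MvPolynomial (Fin 2) ℂ) (h0 : coeff 0 p = 0)
    (h1 : coeff (Finsupp.single 0 1) p = 0) (h2 : coeff (Finsupp.single 1 1) p = 0) :
    p ∈ J2 := by
  rw [← support_sum_monomial_coeff p]
  refine Ideal.sum_mem _ ?_
  intro d hd
  refine monomial_mem d _ ?_ ?_ ?_ <;>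
    rintro rfl <;>
    rw [mem_support_iff] at hd <;>
    [exact hd h0; exact hd h1; exact hd h2]

noncomputable def fLin : (Fin 3 → ℂ) →ₗ[ℂ] MvPolynomial (Fin 2) ℂ where
  toFun v := v 0 • 1 + v 1 • X 0 + v 2 • X 1
  map_add' v w := by
    simp only [Pi.add_apply, add_smul]
    ring
  map_smul' c v := by
    simp only [Pi.smul_apply, smul_eq_mul, RingHom.id_apply, smul_add, smul_smul]

lemma coeffs_fLin (v : Fin 3 → ℂ) :
    coeff 0 (fLin v) = v 0 ∧ coeff (Finsupp.single 0 1) (fLin v) = v 1 ∧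
      coeff (Finsupp.single 1 1) (fLin v) = v 2 := by
  refine ⟨?_, ?_, ?_⟩ <;>
    simp [fLin, coeff_smul, coeff_X', coeff_one, Finsupp.single_eq_single_iff,
      Finsupp.single_eq_zero, eq_comm]


/-- The universal spectral cover is not flat: `ℂ[X,Y]` is not flat as a module
over `ℂ[x,y,z]/(z² − xy)`, and the fibre over the origin, `ℂ[X,Y]/(X², Y², XY)`, is a
`ℂ`-vector space of dimension `3`. -/
theorem statement7 :
    ¬ Module.Flat ConeRing (MvPolynomial (Fin 2) ℂ) ∧
    Module.finrank ℂ
      (MvPolynomial (Fin 2) ℂ ⧸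
        Ideal.span {(X 0 : MvPolynomial (Fin 2) ℂ) ^ 2, (X 1 : MvPolynomial (Fin 2) ℂ) ^ 2,
          (X 0 : MvPolynomial (Fin 2) ℂ) * X 1}) = 3 := by
  refine ⟨notFlat, ?_⟩
  let ψ : (Fin 3 → ℂ) →ₗ[ℂ] (MvPolynomial (Fin 2) ℂ ⧸ J2) :=
    (Ideal.Quotient.mkₐ ℂ J2).toLinearMap.comp fLin
  have hψ : ∀ v, ψ v = Ideal.Quotient.mk J2 (fLin v) := fun v => rfl
  have hinj : Function.Injective ψ := by
    rw [injective_iff_map_eq_zero]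
    intro v hv
    rw [hψ, Ideal.Quotient.eq_zero_iff_mem] at hv
    obtain ⟨a1, a2, a3⟩ := low_of_mem _ hv
    obtain ⟨c1, c2, c3⟩ := coeffs_fLin v
    funext i
    fin_cases i
    · exact (c1.symm.trans a1 : _)
    · exact (c2.symm.trans a2 : _)
    · exact (c3.symm.trans a3 : _)
  have hsurj : Function.Surjective ψ := by
    intro q
    obtain ⟨p, rfl⟩ := Ideal.Quotient.mk_surjective q
    refine ⟨![coeff 0 p, coeff (Finsupp.single 0 1) p, coeff (Finsupp.single 1 1) p], ?_⟩
    rw [hψ, Ideal.Quotient.mk_eq_mk_iff_sub_mem]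
    obtain ⟨c1, c2, c3⟩ := coeffs_fLin
      ![coeff 0 p, coeff (Finsupp.single 0 1) p, coeff (Finsupp.single 1 1) p]
    refine mem_of_low _ ?_ ?_ ?_ <;>
      rw [coeff_sub] <;>
      simp [c1, c2, c3]
  have e := LinearEquiv.ofBijective ψ ⟨hinj, hsurj⟩
  rw [show Ideal.span {(X 0 : MvPolynomial (Fin 2) ℂ) ^ 2, (X 1 : MvPolynomial (Fin 2) ℂ) ^ 2,
      (X 0 : MvPolynomial (Fin 2) ℂ) * X 1} = J2 from rfl]
  rw [← e.finrank_eq]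
  simp [Module.finrank_pi]
end

section
/- Let A and B be traceless 2×2 complex matrices with AB = BA, with a common eigenvector: Av = λ₁v, Bv = λ₂v for some nonzero v ∈ ℂ², and suppose (λ₁, λ₂) ≠ (0,0). Let Φ : ℂ[X,Y] → M₂(ℂ) be the unique ℂ-algebra homomorphism with Φ(X) = A and Φ(Y) = B. Then ker Φ is exactly the ideal I = (X² − λ₁², Y² − λ₂², XY − λ₁λ₂) of ℂ[X,Y]. -/
open MvPolynomial Matrix

lemma red_mem (i j : Fin 2) (hij : i ≠ j) (l1 l2 : ℂ) (h1 : l1 ≠ 0)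
    (p : MvPolynomial (Fin 2) ℂ) :
    p - C ((eval (fun k => if k = i then l1 else l2) p
            + eval (-fun k => if k = i then l1 else l2) p) / 2)
      - C ((eval (fun k => if k = i then l1 else l2) p
            - eval (-fun k => if k = i then l1 else l2) p) / (2 * l1)) * X i ∈
    Ideal.span {(X i : MvPolynomial (Fin 2) ℂ) ^ 2 - C (l1 ^ 2),
        (X j : MvPolynomial (Fin 2) ℂ) ^ 2 - C (l2 ^ 2),
        (X i : MvPolynomial (Fin 2) ℂ) * X j - C (l1 * l2)} := by
  set w : Fin 2 → ℂ := fun k => if k = i then l1 else l2 with hw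
  set I := Ideal.span {(X i : MvPolynomial (Fin 2) ℂ) ^ 2 - C (l1 ^ 2),
        (X j : MvPolynomial (Fin 2) ℂ) ^ 2 - C (l2 ^ 2),
        (X i : MvPolynomial (Fin 2) ℂ) * X j - C (l1 * l2)} with hI
  have hg1 : (X i : MvPolynomial (Fin 2) ℂ) ^ 2 - C (l1 ^ 2) ∈ I :=
    Ideal.subset_span (by simp)
  have hg3 : (X i : MvPolynomial (Fin 2) ℂ) * X j - C (l1 * l2) ∈ I :=
    Ideal.subset_span (by simp)
  have hwi : w i = l1 := by simp [hw]
  have hwj : w j = l2 := by simp [hw, hij.symm]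
  -- the linear relation
  have hlin : (X j : MvPolynomial (Fin 2) ℂ) - C (l2 / l1) * X i ∈ I := by
    have hc : (l1 : ℂ) ^ 2 * (l2 / l1) = l1 * l2 := by field_simp
    have key : C ((l1:ℂ) ^ 2) * (C (l2 / l1) * X i - X j) =
        X j * ((X i : MvPolynomial (Fin 2) ℂ) ^ 2 - C (l1 ^ 2))
          - X i * ((X i : MvPolynomial (Fin 2) ℂ) * X j - C (l1 * l2)) := by
      rw [mul_sub, ← mul_assoc, ← C_mul, hc]; ring
    have hmem : C ((l1:ℂ) ^ 2) * (C (l2 / l1) * X i - X j) ∈ I := by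
      rw [key]
      exact Ideal.sub_mem _ (Ideal.mul_mem_left _ _ hg1) (Ideal.mul_mem_left _ _ hg3)
    have : (C (l2 / l1) * X i - X j : MvPolynomial (Fin 2) ℂ) ∈ I := by
      have e : (C (l2 / l1) * X i - X j : MvPolynomial (Fin 2) ℂ) =
          C (((l1:ℂ) ^ 2)⁻¹) * (C ((l1:ℂ) ^ 2) * (C (l2 / l1) * X i - X j)) := by
        rw [← mul_assoc, ← C_mul, inv_mul_cancel₀ (pow_ne_zero 2 h1), C_1, one_mul]
      rw [e]; exact Ideal.mul_mem_left _ _ hmem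
    simpa using I.neg_mem this
  induction p using MvPolynomial.induction_on with
  | C c => simp
  | add p q hp hq =>
      have hα : ((eval w (p+q) + eval (-w) (p+q))/2)
          = (eval w p + eval (-w) p)/2 + ((eval w q + eval (-w) q)/2) := by
        simp only [map_add]; ring
      have hβ : ((eval w (p+q) - eval (-w) (p+q))/(2*l1))
          = (eval w p - eval (-w) p)/(2*l1) + ((eval w q - eval (-w) q)/(2*l1)) := by
        simp only [map_add]; ring
      rw [hα, hβ, C_add, C_add]
      have := Ideal.add_mem _ hp hq
      convert this using 1
      ring
  | mul_X q n hq =>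
      rcases eq_or_ne n i with rfl | hni
      · -- n = i
        have ei : eval w (q * X n) = eval w q * l1 := by simp [hwi]
        have ei' : eval (-w) (q * X n) = eval (-w) q * (-l1) := by simp [hwi]
        set s := eval w q
        set t := eval (-w) q
        have hα : (eval w (q * X n) + eval (-w) (q * X n)) / 2
            = l1 ^ 2 * ((s - t) / (2 * l1)) := by
          rw [ei, ei']; field_simp; ring
        have hβ : (eval w (q * X n) - eval (-w) (q * X n)) / (2 * l1)
            = (s + t) / 2 := by
          rw [ei, ei']; field_simp; ring
        rw [hα, hβ]
        have key : q * X n - C (l1 ^ 2 * ((s - t) / (2 * l1))) - C ((s + t) / 2) * X n =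
            (q - C ((s + t) / 2) - C ((s - t) / (2 * l1)) * X n) * X n
              + C ((s - t) / (2 * l1)) * (X n ^ 2 - C (l1 ^ 2)) := by
          simp only [C_mul]; ring
        rw [key]
        exact Ideal.add_mem _ (Ideal.mul_mem_right _ _ hq) (Ideal.mul_mem_left _ _ hg1)
      · have hnj : n = j := by omega
        subst hnj
        have ei : eval w (q * X n) = eval w q * l2 := by simp [hwj]
        have ei' : eval (-w) (q * X n) = eval (-w) q * (-l2) := by simp [hwj]
        set s := eval w q
        set t := eval (-w) q
        have hα : (eval w (q * X n) + eval (-w) (q * X n)) / 2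
            = (l1 * l2) * ((s - t) / (2 * l1)) := by
          rw [ei, ei']; field_simp; ring
        have hβ : (eval w (q * X n) - eval (-w) (q * X n)) / (2 * l1)
            = (l2 / l1) * ((s + t) / 2) := by
          rw [ei, ei']; field_simp; ring
        rw [hα, hβ]
        have key : q * X n - C (l1 * l2 * ((s - t) / (2 * l1)))
              - C (l2 / l1 * ((s + t) / 2)) * X i =
            (q - C ((s + t) / 2) - C ((s - t) / (2 * l1)) * X i) * X n
              + C ((s - t) / (2 * l1)) * (X i * X n - C (l1 * l2))
              + C ((s + t) / 2) * (X n - C (l2 / l1) * X i) := by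
          simp only [C_mul]; ring
        rw [key]
        exact Ideal.add_mem _ (Ideal.add_mem _ (Ideal.mul_mem_right _ _ hq)
          (Ideal.mul_mem_left _ _ hg3)) (Ideal.mul_mem_left _ _ hlin)

lemma master (A B : Matrix (Fin 2) (Fin 2) ℂ) (i j : Fin 2) (hij : i ≠ j)
    (l1 l2 : ℂ) (h1 : l1 ≠ 0) (hA0 : A ≠ 0) (htr : A.trace = 0)
    (hA2 : A * A = (l1 ^ 2) • 1) (hB2 : B * B = (l2 ^ 2) • 1)
    (hABs : A * B = (l1 * l2) • 1)
    (Φ : MvPolynomial (Fin 2) ℂ →ₐ[ℂ] Matrix (Fin 2) (Fin 2) ℂ)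
    (hX : Φ (X i) = A) (hY : Φ (X j) = B) :
    RingHom.ker Φ =
      Ideal.span {(X i : MvPolynomial (Fin 2) ℂ) ^ 2 - C (l1 ^ 2),
        (X j : MvPolynomial (Fin 2) ℂ) ^ 2 - C (l2 ^ 2),
        (X i : MvPolynomial (Fin 2) ℂ) * X j - C (l1 * l2)} := by
  have hC : ∀ c : ℂ, Φ (C c) = c • 1 := by
    intro c
    rw [← MvPolynomial.algebraMap_eq, AlgHom.commutes, Algebra.algebraMap_eq_smul_one]
  have hle : Ideal.span {(X i : MvPolynomial (Fin 2) ℂ) ^ 2 - C (l1 ^ 2),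
        (X j : MvPolynomial (Fin 2) ℂ) ^ 2 - C (l2 ^ 2),
        (X i : MvPolynomial (Fin 2) ℂ) * X j - C (l1 * l2)} ≤ RingHom.ker Φ := by
    rw [Ideal.span_le]
    rintro q (rfl | rfl | rfl)
    · rw [SetLike.mem_coe, RingHom.mem_ker, map_sub, map_pow, hX, hC, sq, hA2, sub_self]
    · rw [SetLike.mem_coe, RingHom.mem_ker, map_sub, map_pow, hY, hC, sq, hB2, sub_self]
    · rw [SetLike.mem_coe, RingHom.mem_ker, map_sub, _root_.map_mul, hX, hY, hC, hABs,
        sub_self]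
  refine le_antisymm ?_ hle
  intro p hp
  rw [RingHom.mem_ker] at hp
  have hred := red_mem i j hij l1 l2 h1 p
  set α := ((eval (fun k => if k = i then l1 else l2) p
            + eval (-fun k => if k = i then l1 else l2) p) / 2) with hα
  set β := ((eval (fun k => if k = i then l1 else l2) p
            - eval (-fun k => if k = i then l1 else l2) p) / (2 * l1)) with hβ
  have h0 : Φ (p - C α - C β * X i) = 0 := by
    simpa [RingHom.mem_ker] using hle hred
  rw [map_sub, map_sub, _root_.map_mul, hp, hC, hC, hX] at h0
  have h0' : α • (1 : Matrix (Fin 2) (Fin 2) ℂ) + β • A = 0 := by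
    rw [smul_mul_assoc, one_mul] at h0
    calc α • (1 : Matrix (Fin 2) (Fin 2) ℂ) + β • A
        = -(0 - α • 1 - β • A) := by abel
      _ = 0 := by rw [h0, neg_zero]
  -- take trace
  have htr2 : (2 : ℂ) * α = 0 := by
    have := congrArg Matrix.trace h0'
    simpa [Matrix.trace_add, Matrix.trace_smul, htr, Matrix.trace_one] using this
  have hα0 : α = 0 :=
    (mul_eq_zero.mp htr2).resolve_left two_ne_zero
  have hβ0 : β = 0 := by
    rw [hα0] at h0'
    simp at h0'
    rcases h0' with h | h
    · exact h
    · exact absurd h hA0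
  rw [hα0, hβ0] at hred
  simpa using hred


-- A traceless 2x2 matrix with eigenvalue l on eigenvector v satisfies M^2 = l^2 • 1.
lemma sq_eq (M : Matrix (Fin 2) (Fin 2) ℂ) (l : ℂ) (v : Fin 2 → ℂ) (hv : v ≠ 0)
    (htr : M.trace = 0) (hMv : M.mulVec v = l • v) : M * M = (l ^ 2) • 1 := by
  have htrA : M 0 0 + M 1 1 = 0 := by simpa [Matrix.trace_fin_two] using htr
  have hker : (M - l • 1).mulVec v = 0 := by
    rw [Matrix.sub_mulVec, Matrix.smul_mulVec, Matrix.one_mulVec, hMv, sub_self]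
  have hdet : (M - l • 1).det = 0 := Matrix.exists_mulVec_eq_zero_iff.1 ⟨v, hv, hker⟩
  have hdet' : (M 0 0 - l) * (M 1 1 - l) - M 0 1 * M 1 0 = 0 := by
    rw [Matrix.det_fin_two] at hdet
    simpa [Matrix.sub_apply, Matrix.smul_apply, Matrix.one_apply] using hdet
  ext i' j'
  fin_cases i' <;> fin_cases j' <;>
    simp [Matrix.mul_apply, Fin.sum_univ_two, Matrix.one_apply]
  · linear_combination (-1 : ℂ) * hdet' + (M 0 0 - l) * htrA
  · linear_combination (M 0 1) * htrA
  · linear_combination (M 1 0) * htrA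
  · linear_combination (-1 : ℂ) * hdet' + (M 1 1 - l) * htrA

/-- If `A`, `B` are commuting traceless `2×2` complex matrices with a common
eigenvector `v` of eigenvalues `(λ₁, λ₂) ≠ (0,0)`, and `Φ : ℂ[X,Y] → M₂(ℂ)` is the unique
`ℂ`-algebra homomorphism with `Φ(X) = A`, `Φ(Y) = B`, then
`ker Φ = (X² − λ₁², Y² − λ₂², XY − λ₁λ₂)`. -/
theorem statement9 (A B : Matrix (Fin 2) (Fin 2) ℂ)
    (hA : A.trace = 0) (hB : B.trace = 0) (hAB : A * B = B * A)
    (l1 l2 : ℂ) (hl : (l1, l2) ≠ (0, 0)) (v : Fin 2 → ℂ) (hv : v ≠ 0)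
    (hAv : A.mulVec v = l1 • v) (hBv : B.mulVec v = l2 • v)
    (Φ : MvPolynomial (Fin 2) ℂ →ₐ[ℂ] Matrix (Fin 2) (Fin 2) ℂ)
    (hX : Φ (X 0) = A) (hY : Φ (X 1) = B) :
    RingHom.ker Φ =
      Ideal.span {(X 0 : MvPolynomial (Fin 2) ℂ) ^ 2 - C (l1 ^ 2),
        (X 1 : MvPolynomial (Fin 2) ℂ) ^ 2 - C (l2 ^ 2),
        (X 0 : MvPolynomial (Fin 2) ℂ) * X 1 - C (l1 * l2)} := by
  have hA2 : A * A = (l1 ^ 2) • 1 := sq_eq A l1 v hv hA hAv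
  have hB2 : B * B = (l2 ^ 2) • 1 := sq_eq B l2 v hv hB hBv
  have htrA : A 0 0 + A 1 1 = 0 := by simpa [Matrix.trace_fin_two] using hA
  have htrB : B 0 0 + B 1 1 = 0 := by simpa [Matrix.trace_fin_two] using hB
  have hcomm : ∀ i' j', (A * B) i' j' = (B * A) i' j' := fun i' j' => by rw [hAB]
  have h00 := hcomm 0 0
  have h01 := hcomm 0 1
  have h10 := hcomm 1 0
  simp only [Matrix.mul_apply, Fin.sum_univ_two] at h00 h01 h10
  -- A * B is scalar
  have hdiag : A * B = ((A * B) 0 0) • 1 := by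
    ext i' j'
    fin_cases i' <;> fin_cases j' <;>
      simp [Matrix.mul_apply, Fin.sum_univ_two, Matrix.one_apply]
    · linear_combination (1/2 : ℂ) * h01 + (B 0 1 / 2) * htrA + (A 0 1 / 2) * htrB
    · linear_combination (1/2 : ℂ) * h10 + (B 1 0 / 2) * htrA + (A 1 0 / 2) * htrB
    · linear_combination (-1 : ℂ) * h00 + (B 1 1) * htrA + (-(A 0 0)) * htrB
  obtain ⟨k, hk⟩ : ∃ k, v k ≠ 0 := Function.ne_iff.mp hv
  have hABs : A * B = (l1 * l2) • 1 := by
    have hv1 : (A * B).mulVec v = (l1 * l2) • v := by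
      rw [← Matrix.mulVec_mulVec, hBv, Matrix.mulVec_smul, hAv, smul_smul, mul_comm]
    have hv2 : (A * B).mulVec v = ((A * B) 0 0) • v := by
      nth_rewrite 1 [hdiag]
      rw [Matrix.smul_mulVec, Matrix.one_mulVec]
    have : ((A * B) 0 0) * v k = (l1 * l2) * v k := by
      have := congrFun (hv2.symm.trans hv1) k
      simpa using this
    have hμ : (A * B) 0 0 = l1 * l2 := mul_right_cancel₀ hk this
    rw [hdiag, hμ]
  rcases (by
    by_contra h
    push_neg at h
    exact hl (Prod.ext h.1 h.2) : l1 ≠ 0 ∨ l2 ≠ 0) with h1 | h2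
  · have hA0 : A ≠ 0 := by
      intro h
      rw [h, Matrix.zero_mulVec] at hAv
      rcases (smul_eq_zero.mp hAv.symm) with h' | h'
      · exact h1 h'
      · exact hv h'
    exact master A B 0 1 (by decide) l1 l2 h1 hA0 hA hA2 hB2 hABs Φ hX hY
  · have hB0 : B ≠ 0 := by
      intro h
      rw [h, Matrix.zero_mulVec] at hBv
      rcases (smul_eq_zero.mp hBv.symm) with h' | h'
      · exact h2 h'
      · exact hv h'
    have hBAs : B * A = (l2 * l1) • 1 := by rw [← hAB, hABs, mul_comm l1 l2]
    have key := master B A 1 0 (by decide) l2 l1 h2 hB0 hB hB2 hA2 hBAs Φ hY hX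
    rw [key]
    congr 1
    have e3 : (X 1 : MvPolynomial (Fin 2) ℂ) * X 0 - C (l2 * l1)
        = (X 0 : MvPolynomial (Fin 2) ℂ) * X 1 - C (l1 * l2) := by
      rw [mul_comm l2 l1, mul_comm (X 1 : MvPolynomial (Fin 2) ℂ) (X 0)]
    rw [e3, Set.insert_comm]
end

section
/- Let (λ₁, λ₂) ∈ ℂ² with (λ₁, λ₂) ≠ (0,0), and let f ∈ ℂ[X,Y] satisfy f(λ₁, λ₂) = 0 and f(−λ₁, −λ₂) = 0. Then f lies in the ideal (X² − λ₁², Y² − λ₂², XY − λ₁λ₂) of ℂ[X,Y]. -/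
open MvPolynomial

/-- Any polynomial vanishing at a point `p` lies in the ideal generated by `X i - C (p i)`. -/
lemma mem_span_of_eval_eq_zero (p : Fin 2 → ℂ) (f : MvPolynomial (Fin 2) ℂ)
    (hf : eval p f = 0) :
    f ∈ Ideal.span ({X 0 - C (p 0), X 1 - C (p 1)} : Set (MvPolynomial (Fin 2) ℂ)) := by
  have key : ∀ g : MvPolynomial (Fin 2) ℂ,
      g - C (eval p g) ∈
        Ideal.span ({X 0 - C (p 0), X 1 - C (p 1)} : Set (MvPolynomial (Fin 2) ℂ)) := by
    intro g
    induction g using MvPolynomial.induction_on with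
    | C a => simp
    | add g h hg hh =>
        have := Ideal.add_mem _ hg hh
        have e : g + h - C (eval p (g + h)) = (g - C (eval p g)) + (h - C (eval p h)) := by
          rw [map_add, map_add]; ring
        rw [e]; exact this
    | mul_X g i hg =>
        have e : g * X i - C (eval p (g * X i))
            = (g - C (eval p g)) * X i + C (eval p g) * (X i - C (p i)) := by
          rw [map_mul, eval_X, map_mul]; ring
        rw [e]
        refine Ideal.add_mem _ (Ideal.mul_mem_right _ _ hg) (Ideal.mul_mem_left _ _ ?_)
        fin_cases i
        · exact Ideal.subset_span (Set.mem_insert _ _)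
        · exact Ideal.subset_span (Set.mem_insert_of_mem _ rfl)
  have := key f
  rwa [hf, map_zero, sub_zero] at this

/-- For `(λ₁, λ₂) ≠ (0,0)`, any polynomial `f ∈ ℂ[X,Y]` vanishing at both
`(λ₁, λ₂)` and `(−λ₁, −λ₂)` lies in the ideal `(X² − λ₁², Y² − λ₂², XY − λ₁λ₂)`. -/
theorem statement10 (l1 l2 : ℂ) (hl : (l1, l2) ≠ (0, 0))
    (f : MvPolynomial (Fin 2) ℂ)
    (h1 : eval ![l1, l2] f = 0) (h2 : eval ![-l1, -l2] f = 0) :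
    f ∈ Ideal.span {(X 0 : MvPolynomial (Fin 2) ℂ) ^ 2 - C (l1 ^ 2),
      (X 1 : MvPolynomial (Fin 2) ℂ) ^ 2 - C (l2 ^ 2),
      (X 0 : MvPolynomial (Fin 2) ℂ) * X 1 - C (l1 * l2)} := by
  set I : Ideal (MvPolynomial (Fin 2) ℂ) :=
    Ideal.span {(X 0 : MvPolynomial (Fin 2) ℂ) ^ 2 - C (l1 ^ 2),
      (X 1 : MvPolynomial (Fin 2) ℂ) ^ 2 - C (l2 ^ 2),
      (X 0 : MvPolynomial (Fin 2) ℂ) * X 1 - C (l1 * l2)} with hI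
  have hg1 : (X 0 : MvPolynomial (Fin 2) ℂ) ^ 2 - C (l1 ^ 2) ∈ I :=
    Ideal.subset_span (by simp)
  have hg2 : (X 1 : MvPolynomial (Fin 2) ℂ) ^ 2 - C (l2 ^ 2) ∈ I :=
    Ideal.subset_span (by simp)
  have hg3 : (X 0 : MvPolynomial (Fin 2) ℂ) * X 1 - C (l1 * l2) ∈ I :=
    Ideal.subset_span (by simp)
  -- The key linear element
  have hA : (C l2 * X 0 - C l1 * X 1 : MvPolynomial (Fin 2) ℂ) ∈ I := by
    have hcase : l1 ≠ 0 ∨ l2 ≠ 0 := by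
      by_contra h
      push_neg at h
      exact hl (by simp [h.1, h.2])
    rcases hcase with h | h
    · have key : (C l2 * X 0 - C l1 * X 1 : MvPolynomial (Fin 2) ℂ)
          = C l1⁻¹ * (X 1 * ((X 0) ^ 2 - C (l1 ^ 2)) - X 0 * (X 0 * X 1 - C (l1 * l2))) := by
        have h2' : (C (l1^2) : MvPolynomial (Fin 2) ℂ) = C l1 ^ 2 := by rw [map_pow]
        have h3' : (C (l1*l2) : MvPolynomial (Fin 2) ℂ) = C l1 * C l2 := by rw [map_mul]
        have hu : (C l1⁻¹ * C l1 : MvPolynomial (Fin 2) ℂ) = 1 := by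
          rw [← map_mul, inv_mul_cancel₀ h, map_one]
        rw [h2', h3']
        calc (C l2 * X 0 - C l1 * X 1 : MvPolynomial (Fin 2) ℂ)
            = (C l1⁻¹ * C l1) * (C l2 * X 0 - C l1 * X 1) := by rw [hu, one_mul]
          _ = C l1⁻¹ * (X 1 * ((X 0) ^ 2 - C l1 ^ 2) - X 0 * (X 0 * X 1 - C l1 * C l2)) := by
              ring
      rw [key]
      exact Ideal.mul_mem_left _ _ (Ideal.sub_mem _ (Ideal.mul_mem_left _ _ hg1)
        (Ideal.mul_mem_left _ _ hg3))
    · have key : (C l2 * X 0 - C l1 * X 1 : MvPolynomial (Fin 2) ℂ)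
          = C l2⁻¹ * (X 1 * (X 0 * X 1 - C (l1 * l2)) - X 0 * ((X 1) ^ 2 - C (l2 ^ 2))) := by
        have h2' : (C (l2^2) : MvPolynomial (Fin 2) ℂ) = C l2 ^ 2 := by rw [map_pow]
        have h3' : (C (l1*l2) : MvPolynomial (Fin 2) ℂ) = C l1 * C l2 := by rw [map_mul]
        have hu : (C l2⁻¹ * C l2 : MvPolynomial (Fin 2) ℂ) = 1 := by
          rw [← map_mul, inv_mul_cancel₀ h, map_one]
        rw [h2', h3']
        calc (C l2 * X 0 - C l1 * X 1 : MvPolynomial (Fin 2) ℂ)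
            = (C l2⁻¹ * C l2) * (C l2 * X 0 - C l1 * X 1) := by rw [hu, one_mul]
          _ = C l2⁻¹ * (X 1 * (X 0 * X 1 - C l1 * C l2) - X 0 * ((X 1) ^ 2 - C l2 ^ 2)) := by
              ring
      rw [key]
      exact Ideal.mul_mem_left _ _ (Ideal.sub_mem _ (Ideal.mul_mem_left _ _ hg3)
        (Ideal.mul_mem_left _ _ hg2))
  -- the two maximal ideals
  set m1 : Ideal (MvPolynomial (Fin 2) ℂ) :=
    Ideal.span ({X 0 - C l1, X 1 - C l2} : Set (MvPolynomial (Fin 2) ℂ)) with hm1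
  set m2 : Ideal (MvPolynomial (Fin 2) ℂ) :=
    Ideal.span ({X 0 + C l1, X 1 + C l2} : Set (MvPolynomial (Fin 2) ℂ)) with hm2
  have hf1 : f ∈ m1 := by
    have := mem_span_of_eval_eq_zero ![l1, l2] f h1
    simpa using this
  have hf2 : f ∈ m2 := by
    have := mem_span_of_eval_eq_zero ![-l1, -l2] f h2
    simpa [sub_neg_eq_add] using this
  -- comaximality
  have hcop : m1 ⊔ m2 = ⊤ := by
    have hc1 : (C (2 * l1) : MvPolynomial (Fin 2) ℂ) ∈ m1 ⊔ m2 := by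
      have e : (C (2 * l1) : MvPolynomial (Fin 2) ℂ) = (X 0 + C l1) - (X 0 - C l1) := by
        rw [two_mul, map_add]; ring
      rw [e]
      exact sub_mem (Ideal.mem_sup_right (Ideal.subset_span (Set.mem_insert _ _)))
        (Ideal.mem_sup_left (Ideal.subset_span (Set.mem_insert _ _)))
    have hc2 : (C (2 * l2) : MvPolynomial (Fin 2) ℂ) ∈ m1 ⊔ m2 := by
      have e : (C (2 * l2) : MvPolynomial (Fin 2) ℂ) = (X 1 + C l2) - (X 1 - C l2) := by
        rw [two_mul, map_add]; ring
      rw [e]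
      exact sub_mem (Ideal.mem_sup_right (Ideal.subset_span (Set.mem_insert_of_mem _ rfl)))
        (Ideal.mem_sup_left (Ideal.subset_span (Set.mem_insert_of_mem _ rfl)))
    rw [Ideal.eq_top_iff_one]
    have hcase : l1 ≠ 0 ∨ l2 ≠ 0 := by
      by_contra h
      push_neg at h
      exact hl (by simp [h.1, h.2])
    rcases hcase with h | h
    · have e : (1 : MvPolynomial (Fin 2) ℂ) = C (2 * l1)⁻¹ * C (2 * l1) := by
        rw [← map_mul, inv_mul_cancel₀ (by simpa using h), map_one]
      rw [e]
      exact Ideal.mul_mem_left _ _ hc1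
    · have e : (1 : MvPolynomial (Fin 2) ℂ) = C (2 * l2)⁻¹ * C (2 * l2) := by
        rw [← map_mul, inv_mul_cancel₀ (by simpa using h), map_one]
      rw [e]
      exact Ideal.mul_mem_left _ _ hc2
  -- m1 * m2 ≤ I
  have hmul : m1 * m2 ≤ I := by
    rw [hm1, hm2, Ideal.span_mul_span', Ideal.span_le]
    rintro z ⟨x, hx, y, hy, rfl⟩
    simp only [Set.mem_insert_iff, Set.mem_singleton_iff] at hx hy
    rcases hx with rfl | rfl <;> rcases hy with rfl | rfl
    · have e : ((X 0 - C l1) * (X 0 + C l1) : MvPolynomial (Fin 2) ℂ)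
          = X 0 ^ 2 - C (l1 ^ 2) := by
        rw [map_pow]; ring
      simpa only [e, SetLike.mem_coe] using hg1
    · have e : ((X 0 - C l1) * (X 1 + C l2) : MvPolynomial (Fin 2) ℂ)
          = (X 0 * X 1 - C (l1 * l2)) + (C l2 * X 0 - C l1 * X 1) := by
        rw [map_mul]; ring
      simpa only [e, SetLike.mem_coe] using Ideal.add_mem _ hg3 hA
    · have e : ((X 1 - C l2) * (X 0 + C l1) : MvPolynomial (Fin 2) ℂ)
          = (X 0 * X 1 - C (l1 * l2)) - (C l2 * X 0 - C l1 * X 1) := by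
        rw [map_mul]; ring
      simpa only [e, SetLike.mem_coe] using Ideal.sub_mem _ hg3 hA
    · have e : ((X 1 - C l2) * (X 1 + C l2) : MvPolynomial (Fin 2) ℂ)
          = X 1 ^ 2 - C (l2 ^ 2) := by
        rw [map_pow]; ring
      simpa only [e, SetLike.mem_coe] using hg2
  exact hmul (by
    rw [Ideal.mul_eq_inf_of_coprime hcop]
    exact ⟨hf1, hf2⟩)
end

section
/- Let A = [[0,1],[0,0]] ∈ M₂(ℂ), let a ∈ ℂ, and let B = aA. Let Φ : ℂ[X,Y] → M₂(ℂ) be the unique ℂ-algebra homomorphism with Φ(X) = A and Φ(Y) = B. Then the polynomial f(X,Y) = aX − Y lies in ker Φ but does not lie in the ideal (X², Y², XY) of ℂ[X,Y]. In particular, the containment (X², Y², XY) ⊆ ker Φ is strict. -/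
open MvPolynomial Matrix

/-- For `A = [[0,1],[0,0]]`, `B = aA` and `Φ : ℂ[X,Y] → M₂(ℂ)` the unique
`ℂ`-algebra homomorphism with `Φ(X) = A`, `Φ(Y) = B`, the polynomial `aX − Y` lies in `ker Φ`
but not in the ideal `(X², Y², XY)`; in particular `(X², Y², XY) ⊊ ker Φ`. -/
theorem statement13 (a : ℂ)
    (Φ : MvPolynomial (Fin 2) ℂ →ₐ[ℂ] Matrix (Fin 2) (Fin 2) ℂ)
    (hX : Φ (X 0) = !![0, 1; 0, 0])
    (hY : Φ (X 1) = a • !![(0 : ℂ), 1; 0, 0]) :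
    (C a * X 0 - X 1 ∈ RingHom.ker Φ) ∧
    (C a * X 0 - X 1 ∉ Ideal.span {(X 0 : MvPolynomial (Fin 2) ℂ) ^ 2,
      (X 1 : MvPolynomial (Fin 2) ℂ) ^ 2, (X 0 : MvPolynomial (Fin 2) ℂ) * X 1}) ∧
    Ideal.span {(X 0 : MvPolynomial (Fin 2) ℂ) ^ 2,
      (X 1 : MvPolynomial (Fin 2) ℂ) ^ 2, (X 0 : MvPolynomial (Fin 2) ℂ) * X 1} <
      RingHom.ker Φ := by
  have hA2 : (!![0, 1; 0, 0] : Matrix (Fin 2) (Fin 2) ℂ) * !![0, 1; 0, 0] = 0 := by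
    ext i j
    fin_cases i <;> fin_cases j <;> simp [Matrix.mul_apply, Fin.sum_univ_two]
  have hC : Φ (C a) = a • 1 := by
    rw [← MvPolynomial.algebraMap_eq, AlgHom.commutes, Algebra.algebraMap_eq_smul_one]
  have hker : C a * X 0 - X 1 ∈ RingHom.ker Φ := by
    simp only [RingHom.mem_ker, map_sub, _root_.map_mul, hX, hY, hC, smul_mul_assoc,
      one_mul, sub_self]
  -- the evaluation at X0 ↦ 0, X1 ↦ ε in dual numbers
  set φ : MvPolynomial (Fin 2) ℂ →ₐ[ℂ] DualNumber ℂ :=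
    aeval (fun i => if i = 0 then 0 else DualNumber.eps)
  have hφ0 : φ (X 0) = 0 := by simp [φ]
  have hφ1 : φ (X 1) = DualNumber.eps := by simp [φ]
  have hspan_ker : Ideal.span {(X 0 : MvPolynomial (Fin 2) ℂ) ^ 2,
      (X 1 : MvPolynomial (Fin 2) ℂ) ^ 2, (X 0 : MvPolynomial (Fin 2) ℂ) * X 1} ≤
      RingHom.ker (φ : MvPolynomial (Fin 2) ℂ →+* DualNumber ℂ) := by
    rw [Ideal.span_le]
    rintro p (rfl | rfl | rfl) <;>
      simp [RingHom.mem_ker, pow_two, hφ0, hφ1, DualNumber.eps_mul_eps]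
  have hnotmem : C a * X 0 - X 1 ∉ Ideal.span {(X 0 : MvPolynomial (Fin 2) ℂ) ^ 2,
      (X 1 : MvPolynomial (Fin 2) ℂ) ^ 2, (X 0 : MvPolynomial (Fin 2) ℂ) * X 1} := by
    intro h
    have h0 : φ (C a * X 0 - X 1) = 0 := hspan_ker h
    rw [map_sub, _root_.map_mul, hφ0, hφ1, mul_zero, zero_sub, neg_eq_zero] at h0
    have h2 := congrArg TrivSqZeroExt.snd h0
    simp only [DualNumber.eps, TrivSqZeroExt.snd_inr, TrivSqZeroExt.snd_zero] at h2
    exact one_ne_zero h2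
  refine ⟨hker, hnotmem, ?_⟩
  have hle : Ideal.span {(X 0 : MvPolynomial (Fin 2) ℂ) ^ 2,
      (X 1 : MvPolynomial (Fin 2) ℂ) ^ 2, (X 0 : MvPolynomial (Fin 2) ℂ) * X 1} ≤
      RingHom.ker Φ := by
    rw [Ideal.span_le]
    rintro p (rfl | rfl | rfl) <;>
      · simp only [SetLike.mem_coe, RingHom.mem_ker, _root_.map_mul, pow_two, hX, hY, smul_mul_assoc,
          mul_smul_comm, hA2, smul_zero]
  exact lt_of_le_of_ne hle (fun h => hnotmem (h ▸ hker))
end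

section
/- Let R be a commutative ring, let z, a₁, a₂, a₃ ∈ R, let n ≥ m be natural numbers, and set b₁ = zⁿa₁, b₂ = a₂ and b₃ = zᵐa₃. In the quotient ring S = R[X,Y]/(X² − b₁, Y² − b₂, XY − b₃), denoting by X, Y the images of the variables, one has b₃·X = b₁·Y, and consequently zᵐ·(a₃·X − z^{n−m}·a₁·Y) = 0 in S. In particular, if R is a domain in which zᵐ ≠ 0 and a₃X − z^{n−m}a₁Y ≠ 0 in S, then a₃X − z^{n−m}a₁Y is a torsion element of the R-module S. -/
open MvPolynomial

/-- In the local model `S = R[X,Y]/(X² − b₁, Y² − b₂, XY − b₃)` of the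
spectral curve, with `b₁ = zⁿa₁`, `b₂ = a₂`, `b₃ = zᵐa₃` and `m ≤ n`, one has
`b₃·X = b₁·Y`, hence `zᵐ·(a₃X − z^{n−m}a₁Y) = 0`; in particular, if `R` is a domain with
`zᵐ ≠ 0` and `a₃X − z^{n−m}a₁Y ≠ 0` in `S`, then `a₃X − z^{n−m}a₁Y` is a torsion element of
the `R`-module `S`. -/
theorem statement15 {R : Type*} [CommRing R] (z a₁ a₂ a₃ : R) (n m : ℕ) (hnm : m ≤ n)
    (b₁ b₂ b₃ : R) (hb₁ : b₁ = z ^ n * a₁) (hb₂ : b₂ = a₂) (hb₃ : b₃ = z ^ m * a₃)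
    (I : Ideal (MvPolynomial (Fin 2) R))
    (hI : I = Ideal.span {(X 0 : MvPolynomial (Fin 2) R) ^ 2 - C b₁,
      (X 1 : MvPolynomial (Fin 2) R) ^ 2 - C b₂,
      (X 0 : MvPolynomial (Fin 2) R) * X 1 - C b₃}) :
    Ideal.Quotient.mk I (C b₃ * X 0) = Ideal.Quotient.mk I (C b₁ * X 1) ∧
    (z ^ m) • Ideal.Quotient.mk I (C a₃ * X 0 - C (z ^ (n - m) * a₁) * X 1) = 0 ∧
    (IsDomain R → z ^ m ≠ 0 →
      Ideal.Quotient.mk I (C a₃ * X 0 - C (z ^ (n - m) * a₁) * X 1) ≠ 0 →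
      Ideal.Quotient.mk I (C a₃ * X 0 - C (z ^ (n - m) * a₁) * X 1) ∈
        Submodule.torsion R (MvPolynomial (Fin 2) R ⧸ I)) := by
  have hmem : (C b₃ * X 0 - C b₁ * X 1 : MvPolynomial (Fin 2) R) ∈ I := by
    rw [hI]
    have h3 : ((X 0 : MvPolynomial (Fin 2) R) * X 1 - C b₃) ∈
        Ideal.span {(X 0 : MvPolynomial (Fin 2) R) ^ 2 - C b₁,
          (X 1 : MvPolynomial (Fin 2) R) ^ 2 - C b₂,
          (X 0 : MvPolynomial (Fin 2) R) * X 1 - C b₃} :=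
      Ideal.subset_span (by simp)
    have h1 : ((X 0 : MvPolynomial (Fin 2) R) ^ 2 - C b₁) ∈
        Ideal.span {(X 0 : MvPolynomial (Fin 2) R) ^ 2 - C b₁,
          (X 1 : MvPolynomial (Fin 2) R) ^ 2 - C b₂,
          (X 0 : MvPolynomial (Fin 2) R) * X 1 - C b₃} :=
      Ideal.subset_span (by simp)
    have key : (C b₃ * X 0 - C b₁ * X 1 : MvPolynomial (Fin 2) R) =
        X 1 * ((X 0) ^ 2 - C b₁) - X 0 * (X 0 * X 1 - C b₃) := by ring
    rw [key]
    exact sub_mem (Ideal.mul_mem_left _ _ h1) (Ideal.mul_mem_left _ _ h3)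
  have h1 : Ideal.Quotient.mk I (C b₃ * X 0) = Ideal.Quotient.mk I (C b₁ * X 1) :=
    Ideal.Quotient.eq.mpr hmem
  have hzn : z ^ m * z ^ (n - m) = z ^ n := by
    rw [← pow_add, Nat.add_sub_cancel' hnm]
  have h2 : (z ^ m) • Ideal.Quotient.mk I (C a₃ * X 0 - C (z ^ (n - m) * a₁) * X 1) = 0 := by
    have : (z ^ m) • (C a₃ * X 0 - C (z ^ (n - m) * a₁) * X 1 : MvPolynomial (Fin 2) R)
        = C b₃ * X 0 - C b₁ * X 1 := by
      rw [hb₁, hb₃, ← hzn, smul_eq_C_mul]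
      simp only [map_mul]
      ring
    calc (z ^ m) • Ideal.Quotient.mk I (C a₃ * X 0 - C (z ^ (n - m) * a₁) * X 1)
        = Ideal.Quotient.mk I ((z ^ m) • (C a₃ * X 0 - C (z ^ (n - m) * a₁) * X 1)) :=
          (Submodule.Quotient.mk_smul I (z ^ m) _).symm
      _ = 0 := by rw [this, Ideal.Quotient.eq_zero_iff_mem]; exact hmem
  refine ⟨h1, h2, fun hdom hz hne => ?_⟩
  exact ⟨⟨z ^ m, mem_nonZeroDivisors_of_ne_zero hz⟩, h2⟩
end
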